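/- In the Type II game, every point a* ∈ ℝ_{>0}^N with Σ_m τ_m a_m* < μ is a conjectural equilibrium: setting λ_n* = β_n(μ − Σ_m τ_m a_m*)/a_n*, reference points s̄_n = μ − Σ_m τ_m a_m* and ā_n = a_n*, the belief s̃_n(a_n) = s̄_n − λ_n*(a_n − ā_n) satisfies s̃_n(a_n*) = s_n(a*) and a_n* maximizes a_n ↦ a_n^{β_n}·s̃_n(a_n). -/

import Mathlib

open Finset

lemma key_ineq (b t : ℝ) (hb : 0 < b) (ht : 0 < t) (hu : 0 ≤ 1 + b - b * t) :
    t ^ b * (1 + b - b * t) ≤ 1 := by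
  set u : ℝ := 1 + b - b * t with hudef
  have h1b : (0:ℝ) < 1 + b := by linarith
  have hw1 : (0:ℝ) ≤ b / (1 + b) := by positivity
  have hw2 : (0:ℝ) ≤ 1 / (1 + b) := by positivity
  have hsum : b / (1 + b) + 1 / (1 + b) = 1 := by field_simp; ring
  have hgm := Real.geom_mean_le_arith_mean2_weighted hw1 hw2 ht.le hu hsum
  have harith : b / (1 + b) * t + 1 / (1 + b) * u = 1 := by
    rw [hudef]; field_simp; ring
  rw [harith] at hgm
  have hx : (0:ℝ) ≤ t ^ (b / (1 + b)) * u ^ (1 / (1 + b)) := by positivity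
  have := Real.rpow_le_one hx hgm (le_of_lt h1b)
  calc t ^ b * u = (t ^ (b / (1 + b)) * u ^ (1 / (1 + b))) ^ (1 + b) := by
        rw [Real.mul_rpow (by positivity) (by positivity)]
        rw [← Real.rpow_mul ht.le, ← Real.rpow_mul hu]
        rw [div_mul_cancel₀ _ (ne_of_gt h1b), div_mul_cancel₀ _ (ne_of_gt h1b),
          Real.rpow_one]
    _ ≤ 1 := this

/-- In Type II games, every positive feasible point is a conjectural
equilibrium with the linear beliefs given by `λ_n* = β_n s_n(a*)/a_n*` and reference
points `(s_n(a*), a_n*)`. -/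
theorem typeII_all_points_CE (N : ℕ) (hN : 1 ≤ N)
    (β τ : Fin N → ℝ) (μ : ℝ)
    (hβ : ∀ n, 0 < β n) (hτ : ∀ n, 0 < τ n) (hμ : 0 < μ)
    (a : Fin N → ℝ) (ha : ∀ n, 0 < a n) (hfeas : ∑ m, τ m * a m < μ)
    (lam : Fin N → ℝ)
    (hlam : ∀ n, lam n = β n * (μ - ∑ m, τ m * a m) / a n)
    (stilde : Fin N → ℝ → ℝ)
    (hs : ∀ n y, stilde n y = (μ - ∑ m, τ m * a m) - lam n * (y - a n)) :
    ∀ n, stilde n (a n) = μ - ∑ m, τ m * a m ∧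
      IsMaxOn (fun y => Real.rpow y (β n) * stilde n y)
        {y : ℝ | 0 < y ∧ 0 < stilde n y} (a n) := by
  intro n
  set s : ℝ := μ - ∑ m, τ m * a m with hsdef
  have hspos : 0 < s := by rw [hsdef]; linarith
  have hfa : stilde n (a n) = s := by rw [hs]; ring
  refine ⟨hfa, ?_⟩
  rw [isMaxOn_iff]
  intro y hy
  obtain ⟨hy0, hsy⟩ := hy
  have han := ha n
  have hβn := hβ n
  show y ^ β n * stilde n y ≤ (a n) ^ β n * stilde n (a n)
  rw [hfa]
  set t : ℝ := y / a n with htdef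
  have ht : 0 < t := div_pos hy0 han
  have hu : stilde n y = s * (1 + β n - β n * t) := by
    rw [hs, hlam, htdef]; field_simp; ring
  have hupos : 0 < 1 + β n - β n * t := by
    rw [hu] at hsy; nlinarith [hsy, hspos]
  have key := key_ineq (β n) t hβn ht hupos.le
  have hy' : y = t * a n := by rw [htdef]; field_simp
  calc y ^ β n * stilde n y
      = (t ^ β n * (1 + β n - β n * t)) * ((a n) ^ β n * s) := by
        rw [hu, hy', Real.mul_rpow ht.le han.le]; ring
    _ ≤ 1 * ((a n) ^ β n * s) := by
        apply mul_le_mul_of_nonneg_right key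
        positivity
    _ = (a n) ^ β n * s := by ring
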